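/- Let G be a connected graph on n ≥ 2 vertices, C_G = G ⊙ K_1, S a maximum independent set of G, and define f on C_G by f(l_i) = 2 if v_i ∈ S, f(l_i) = 1 if v_i ∉ S, and f ≡ 0 on V(G). Then f is a boundary independent broadcast on C_G of cost n + α(G). -/

import Mathlib

open SimpleGraph Finset

/-- The eccentricity of a vertex: the maximum distance to any other vertex. -/
noncomputable def ecc {V : Type*} [Fintype V] (G : SimpleGraph V) (v : V) : ℕ :=
  Finset.univ.sup fun u => G.dist v u

/-- A broadcast: each vertex broadcasts with strength at most its eccentricity. -/
def IsBroadcast {V : Type*} [Fintype V] (G : SimpleGraph V) (f : V → ℕ) : Prop :=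
  ∀ v, f v ≤ ecc G v

/-- A boundary independent broadcast. -/
def IsBnIndep {V : Type*} [Fintype V] (G : SimpleGraph V) (f : V → ℕ) : Prop :=
  IsBroadcast G f ∧ ∀ u v, u ≠ v → 1 ≤ f u → 1 ≤ f v → f u + f v ≤ G.dist u v

/-- The maximum cost of a boundary independent broadcast. -/
noncomputable def alphaBn {V : Type*} [Fintype V] (G : SimpleGraph V) : ℕ :=
  sSup {k | ∃ f : V → ℕ, IsBnIndep G f ∧ ∑ v, f v = k}

/-- The independence number. -/
noncomputable def indepNum {V : Type*} [Fintype V] (G : SimpleGraph V) : ℕ :=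
  sSup {k | ∃ s : Finset V, (∀ u ∈ s, ∀ v ∈ s, u ≠ v → ¬ G.Adj u v) ∧ s.card = k}

/-- The corona `G ⊙ K₁`: attach a pendant leaf `Sum.inr v` to each vertex `Sum.inl v`. -/
def corona {V : Type*} (G : SimpleGraph V) : SimpleGraph (V ⊕ V) where
  Adj x y :=
    match x, y with
    | Sum.inl u, Sum.inl v => G.Adj u v
    | Sum.inl u, Sum.inr v => u = v
    | Sum.inr u, Sum.inl v => u = v
    | Sum.inr _, Sum.inr _ => False
  symm := by
    constructor
    rintro (u | u) (v | v) h
    · exact G.adj_symm h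
    · exact h.symm
    · exact h.symm
    · exact h.elim
  loopless := by
    constructor
    rintro (u | u) h
    · exact G.irrefl h
    · exact h.elim

section CoronaAux
variable {V : Type*} (G : SimpleGraph V)

def coronaHom : G →g corona G := ⟨Sum.inl, fun h => h⟩

lemma corona_adj_inr_right {x : V ⊕ V} {j : V} (h : (corona G).Adj x (Sum.inr j)) :
    x = Sum.inl j := by
  cases x with
  | inl u => exact congrArg Sum.inl h
  | inr u => exact h.elim

variable {G}

lemma walk_proj_dist (hG : G.Connected) {x y : V ⊕ V} (p : (corona G).Walk x y) :
    G.dist (Sum.elim id id x) (Sum.elim id id y) ≤ p.length := by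
  induction p with
  | nil => simp
  | @cons a b c h q ih =>
      have h1 : G.dist (Sum.elim id id a) (Sum.elim id id b) ≤ 1 := by
        cases a with
        | inl u =>
          cases b with
          | inl v => exact dist_le (G := G) (SimpleGraph.Adj.toWalk (show G.Adj u v from h))
          | inr v => simp [show u = v from h, SimpleGraph.dist_self]
        | inr u =>
          cases b with
          | inl v => simp [show u = v from h, SimpleGraph.dist_self]
          | inr v => exact h.elim
      calc G.dist (Sum.elim id id a) (Sum.elim id id c)
          ≤ G.dist (Sum.elim id id a) (Sum.elim id id b)
            + G.dist (Sum.elim id id b) (Sum.elim id id c) := hG.dist_triangle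
        _ ≤ 1 + q.length := Nat.add_le_add h1 ih
        _ = (SimpleGraph.Walk.cons h q).length := by simp [Nat.add_comm]

lemma walk_to_leaf (hG : G.Connected) :
    ∀ {x y : V ⊕ V} (p : (corona G).Walk x y) {j : V}, y = Sum.inr j → x ≠ Sum.inr j →
      G.dist (Sum.elim id id x) j + 1 ≤ p.length := by
  intro x y p
  induction p with
  | nil => intro j hy h; exact absurd hy h
  | @cons a b c h q ih =>
      intro j hy _
      subst hy
      by_cases hb : b = Sum.inr j
      · subst hb
        have ha : a = Sum.inl j := corona_adj_inr_right G h
        subst ha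
        simp [SimpleGraph.dist_self]
      · have := ih rfl hb
        have tri : G.dist (Sum.elim id id a) j
            ≤ G.dist (Sum.elim id id a) (Sum.elim id id b) + G.dist (Sum.elim id id b) j :=
          hG.dist_triangle
        have h1 : G.dist (Sum.elim id id a) (Sum.elim id id b) ≤ 1 := by
          cases a with
          | inl u =>
            cases b with
            | inl v => exact dist_le (G := G) (SimpleGraph.Adj.toWalk (show G.Adj u v from h))
            | inr v => simp [show u = v from h, SimpleGraph.dist_self]
          | inr u =>
            cases b with
            | inl v => simp [show u = v from h, SimpleGraph.dist_self]
            | inr v => exact h.elim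
        simp only [SimpleGraph.Walk.length_cons]
        omega

lemma leaf_leaf_walk (hG : G.Connected) {i j : V} (hij : i ≠ j)
    (p : (corona G).Walk (Sum.inr i) (Sum.inr j)) :
    G.dist i j + 2 ≤ p.length := by
  cases p with
  | nil => exact absurd rfl hij
  | cons h q =>
      rename_i b
      have hb : b = Sum.inl i := ((corona G).adj_symm h |> corona_adj_inr_right G)
      subst hb
      have := walk_to_leaf hG q rfl (by simp)
      simp only [Sum.elim_inl, id] at this
      simp only [SimpleGraph.Walk.length_cons]
      omega

lemma corona_reachable (hG : G.Connected) (i j : V) :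
    (corona G).Reachable (Sum.inr i) (Sum.inr j) := by
  have h1 : (corona G).Adj (Sum.inr i) (Sum.inl i) := rfl
  have h2 : (corona G).Adj (Sum.inl j) (Sum.inr j) := rfl
  exact h1.reachable.trans (((hG i j).map (coronaHom G)).trans h2.reachable)

lemma leaf_dist_ge (hG : G.Connected) {i j : V} (hij : i ≠ j) :
    G.dist i j + 2 ≤ (corona G).dist (Sum.inr i) (Sum.inr j) := by
  obtain ⟨p, hp⟩ := (corona_reachable hG i j).exists_walk_length_eq_dist
  rw [← hp]
  exact leaf_leaf_walk hG hij p


end CoronaAux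

theorem corona_leaf_broadcast_isBnIndep {V : Type*} [Fintype V] [DecidableEq V]
    (G : SimpleGraph V) (hG : G.Connected) (hn : 2 ≤ Fintype.card V)
    (S : Finset V) (hSindep : ∀ u ∈ S, ∀ v ∈ S, u ≠ v → ¬ G.Adj u v)
    (hSmax : S.card = _root_.indepNum G)
    (f : V ⊕ V → ℕ)
    (hf : f = Sum.elim (fun _ => 0) (fun i => if i ∈ S then 2 else 1)) :
    IsBnIndep (corona G) f ∧ ∑ x, f x = Fintype.card V + _root_.indepNum G := by
  subst hf
  refine ⟨⟨?_, ?_⟩, ?_⟩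
  · -- broadcast
    rintro (v | i)
    · simp
    · obtain ⟨j, hj⟩ := Fintype.exists_ne_of_one_lt_card (by omega) i
      have hd := leaf_dist_ge hG (fun h => hj (h.symm))
      have hle : (corona G).dist (Sum.inr i) (Sum.inr j) ≤ ecc (corona G) (Sum.inr i) :=
        Finset.le_sup (Finset.mem_univ _)
      have : Sum.elim (fun _ : V => (0:ℕ)) (fun i => if i ∈ S then 2 else 1) (Sum.inr i) ≤ 2 := by
        dsimp only [Sum.elim_inr]; split_ifs <;> omega
      omega
  · -- boundary independence
    rintro (u | i) (v | j) hne h1 h2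
    · simp at h1
    · simp at h1
    · simp at h2
    · have hij : i ≠ j := fun h => hne (congrArg Sum.inr h)
      have hd := leaf_dist_ge hG hij
      have hd1 : 1 ≤ G.dist i j := hG.pos_dist_of_ne hij
      have hS2 : i ∈ S → j ∈ S → 2 ≤ G.dist i j := by
        intro hi hj'
        have hna := hSindep i hi j hj' hij
        have : G.dist i j ≠ 1 := fun h => hna (SimpleGraph.dist_eq_one_iff_adj.mp h)
        omega
      dsimp only [Sum.elim_inr]
      split_ifs with hi hj' hj'
      · have := hS2 hi hj'; omega
      · omega
      · omega
      · omega
  · -- cost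
    rw [Fintype.sum_sum_type]
    simp only [Sum.elim_inl, Sum.elim_inr, Finset.sum_const_zero, zero_add]
    rw [← hSmax]
    have h1 : ∀ i : V, (if i ∈ S then 2 else 1) = 1 + (if i ∈ S then 1 else 0) := by
      intro i; split_ifs <;> rfl
    simp_rw [h1, Finset.sum_add_distrib, Finset.sum_const, smul_eq_mul, mul_one,
      Finset.sum_ite_mem, Finset.univ_inter, Finset.sum_const, smul_eq_mul, mul_one,
      Finset.card_univ]
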